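/- Let r, a, b, c be natural numbers, let A be a b × a matrix and B a c × b matrix with entries in MvPolynomial (Fin r) ℂ, and suppose B * A = 0. Then there exists z : Fin r → ℂ with ‖z i‖ = 1 for all i such that for every w : Fin r → ℂ, rank A(w) + rank B(w) ≤ rank A(z) + rank B(z); that is, the minimal middle homology dimension b − rank A − rank B over all of ℂ^r is attained at a point of the real torus (S¹)^r. -/

import Mathlib

open MvPolynomial Matrix

/-- The unit circle in `ℂ` is infinite. -/
lemma aux_circle_infinite : {y : ℂ | ‖y‖ = 1}.Infinite := by
  have hinj : Set.InjOn (fun θ : ℝ => Complex.exp (θ * Complex.I)) (Set.Ioo (0:ℝ) 1) := by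
    intro x hx y hy hxy
    rw [Complex.exp_eq_exp_iff_exists_int] at hxy
    obtain ⟨n, hn⟩ := hxy
    have h2 : ((x - y - n * (2 * Real.pi) : ℝ) : ℂ) * Complex.I = 0 := by
      push_cast
      linear_combination hn
    have h3 : (x - y - n * (2 * Real.pi) : ℝ) = 0 := by
      rcases mul_eq_zero.mp h2 with h | h
      · exact_mod_cast h
      · exact absurd h Complex.I_ne_zero
    have hn0 : n = 0 := by
      by_contra h0
      have h1 : (1:ℝ) ≤ |(n:ℝ)| := by exact_mod_cast Int.one_le_abs h0
      have hpi := Real.pi_gt_three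
      have hxy' : |x - y| < 1 := by
        rw [abs_sub_lt_iff]
        constructor <;> nlinarith [hx.1, hx.2, hy.1, hy.2]
      have : x - y = (n:ℝ) * (2 * Real.pi) := by linarith
      rw [this, abs_mul] at hxy'
      have h2pi : |2 * Real.pi| = 2 * Real.pi := abs_of_pos (by positivity)
      rw [h2pi] at hxy'
      nlinarith
    have : x - y = 0 := by rw [hn0] at h3; push_cast at h3; linarith
    linarith
  have himg : (fun θ : ℝ => Complex.exp (θ * Complex.I)) '' (Set.Ioo 0 1) ⊆ {y : ℂ | ‖y‖ = 1} := by
    rintro _ ⟨θ, -, rfl⟩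
    simp [Complex.norm_exp]
  exact Set.Infinite.mono himg ((Set.Ioo_infinite (by norm_num)).image hinj)

/-- A nonzero polynomial over `ℂ` does not vanish identically on the real torus. -/
lemma aux_torus_dense : ∀ (r : ℕ) (p : MvPolynomial (Fin r) ℂ), p ≠ 0 →
    ∃ z : Fin r → ℂ, (∀ i, ‖z i‖ = 1) ∧ MvPolynomial.eval z p ≠ 0 := by
  intro r
  induction r with
  | zero =>
    intro p hp
    refine ⟨fun i => i.elim0, fun i => i.elim0, ?_⟩
    rw [eq_C_of_isEmpty p, MvPolynomial.eval_C]
    intro h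
    apply hp
    rw [eq_C_of_isEmpty p, h, map_zero]
  | succ n ih =>
    intro p hp
    set q := MvPolynomial.finSuccEquiv ℂ n p with hq
    have hq0 : q ≠ 0 := by
      simp only [hq, ne_eq, EmbeddingLike.map_eq_zero_iff]
      exact hp
    have hlc : q.leadingCoeff ≠ 0 := Polynomial.leadingCoeff_ne_zero.mpr hq0
    obtain ⟨z, hz, hez⟩ := ih _ hlc
    have hmap : q.map (MvPolynomial.eval z) ≠ 0 := by
      intro h
      apply hez
      have h2 : Polynomial.coeff (q.map (MvPolynomial.eval z)) q.natDegree = 0 := by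
        rw [h, Polynomial.coeff_zero]
      rw [Polynomial.coeff_map] at h2
      exact h2
    obtain ⟨y, hy⟩ : ({y : ℂ | ‖y‖ = 1} \ {x | (q.map (MvPolynomial.eval z)).IsRoot x}).Nonempty :=
      (aux_circle_infinite.diff (Polynomial.finite_setOf_isRoot hmap)).nonempty
    refine ⟨Fin.cons y z, ?_, ?_⟩
    · intro i
      refine Fin.cases ?_ ?_ i
      · exact hy.1
      · intro j; simpa using hz j
    · rw [MvPolynomial.eval_eq_eval_mv_eval']
      exact hy.2

/-- From a matrix of rank `k` one can pick `k` linearly independent rows. -/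
lemma aux_exists_rows (m n k : ℕ) (N : Matrix (Fin m) (Fin n) ℂ) (h : N.rank = k) :
    ∃ f : Fin k → Fin m, LinearIndependent ℂ (fun i => N (f i)) := by
  classical
  obtain ⟨s, hst, hsp, hli⟩ := exists_linearIndependent ℂ (Set.range N)
  have hfin : s.Finite := (Set.finite_range N).subset hst
  haveI := hfin.fintype
  have hcard : Fintype.card s = k := by
    rw [← Set.toFinset_card, ← finrank_span_set_eq_card hli, hsp]
    exact (Matrix.rank_eq_finrank_span_row N).symm.trans h
  let e : Fin k ≃ s := (Fintype.equivFinOfCardEq hcard).symm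
  have hchoice : ∀ i : Fin k, ∃ j : Fin m, N j = (e i : Fin n → ℂ) := fun i => hst (e i).2
  choose f hf using hchoice
  refine ⟨f, ?_⟩
  have : (fun i => N (f i)) = (fun x : s => (x : Fin n → ℂ)) ∘ e := by
    funext i; simp [hf i]
  rw [this]
  exact hli.comp e e.injective

/-- A matrix has a nonzero minor of size equal to its rank. -/
lemma aux_exists_minor (m n : ℕ) (N : Matrix (Fin m) (Fin n) ℂ) :
    ∃ (f : Fin N.rank → Fin m) (g : Fin N.rank → Fin n), (N.submatrix f g).det ≠ 0 := by
  classical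
  obtain ⟨f, hf⟩ := aux_exists_rows m n N.rank N rfl
  have hf' : LinearIndependent ℂ (fun i => (N.submatrix f id) i) := hf
  have h1 : (N.submatrix f id).rank = N.rank := by
    rw [LinearIndependent.rank_matrix (M := N.submatrix f id) hf', Fintype.card_fin]
  have h2 : (N.submatrix f id)ᵀ.rank = N.rank := by rw [Matrix.rank_transpose, h1]
  obtain ⟨g, hg⟩ := aux_exists_rows n N.rank N.rank (N.submatrix f id)ᵀ h2
  refine ⟨f, g, ?_⟩
  have hg' : LinearIndependent ℂ (fun i => ((N.submatrix f id)ᵀ.submatrix g id) i) := hg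
  have hU : IsUnit ((N.submatrix f id)ᵀ.submatrix g id) :=
    Matrix.linearIndependent_rows_iff_isUnit.mp hg'
  have hdet : ((N.submatrix f id)ᵀ.submatrix g id).det ≠ 0 :=
    IsUnit.ne_zero ((Matrix.isUnit_iff_isUnit_det _).mp hU)
  have hTT : (N.submatrix f g)ᵀ = (N.submatrix f id)ᵀ.submatrix g id := rfl
  rw [← Matrix.det_transpose, hTT]
  exact hdet

/-- A nonzero `k × k` minor forces the rank to be at least `k`. -/
lemma aux_rank_ge_of_minor (m n k : ℕ) (M : Matrix (Fin m) (Fin n) ℂ)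
    (f : Fin k → Fin m) (g : Fin k → Fin n) (h : (M.submatrix f g).det ≠ 0) :
    k ≤ M.rank := by
  classical
  have hU : IsUnit (M.submatrix f g) :=
    (Matrix.isUnit_iff_isUnit_det _).mpr (isUnit_iff_ne_zero.mpr h)
  have hrk : (M.submatrix f g).rank = k := by
    rw [Matrix.rank_of_isUnit _ hU, Fintype.card_fin]
  have he : ((1 : Matrix (Fin m) (Fin m) ℂ).submatrix f (Equiv.refl (Fin m))) * M *
      ((1 : Matrix (Fin n) (Fin n) ℂ).submatrix (Equiv.refl (Fin n)) g) = M.submatrix f g := by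
    rw [Matrix.one_submatrix_mul f (Equiv.refl (Fin m)) M,
      Matrix.mul_submatrix_one (Equiv.refl (Fin n)) g]
    simp [Matrix.submatrix_submatrix]
  calc k = (M.submatrix f g).rank := hrk.symm
    _ = (((1 : Matrix (Fin m) (Fin m) ℂ).submatrix f (Equiv.refl (Fin m))) * M *
        ((1 : Matrix (Fin n) (Fin n) ℂ).submatrix (Equiv.refl (Fin n)) g)).rank := by rw [he]
    _ ≤ (((1 : Matrix (Fin m) (Fin m) ℂ).submatrix f (Equiv.refl (Fin m))) * M).rank :=
        Matrix.rank_mul_le_left _ _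
    _ ≤ M.rank := Matrix.rank_mul_le_right _ _

/-- The generic (maximal) value of `rank A(z) + rank B(z)` for a two-step complex of
matrices of polynomials with `B * A = 0` is attained at a point of the real torus
`(S¹)^r ⊂ (ℂ*)^r`; equivalently, the minimal middle homology dimension
`b - rank A - rank B` is attained at a unitary point. -/
theorem generic_homology_attained_on_torus
    (r a b c : ℕ)
    (A : Matrix (Fin b) (Fin a) (MvPolynomial (Fin r) ℂ))
    (B : Matrix (Fin c) (Fin b) (MvPolynomial (Fin r) ℂ))
    (hBA : B * A = 0) :
    ∃ z : Fin r → ℂ, (∀ i, ‖z i‖ = 1) ∧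
      ∀ w : Fin r → ℂ,
        (A.map (MvPolynomial.eval w)).rank + (B.map (MvPolynomial.eval w)).rank ≤
          (A.map (MvPolynomial.eval z)).rank + (B.map (MvPolynomial.eval z)).rank := by
  classical
  set F : (Fin r → ℂ) → ℕ :=
    fun w => (A.map (MvPolynomial.eval w)).rank + (B.map (MvPolynomial.eval w)).rank with hF
  have hbdd : BddAbove (Set.range F) := by
    refine ⟨a + b, ?_⟩
    rintro x ⟨w, rfl⟩
    exact add_le_add ((A.map _).rank_le_card_width.trans (by simp))
      ((B.map _).rank_le_card_width.trans (by simp))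
  have hne : (Set.range F).Nonempty := ⟨F 0, ⟨0, rfl⟩⟩
  obtain ⟨w0, hw0⟩ := Nat.sSup_mem hne hbdd
  have hmax : ∀ w, F w ≤ F w0 := fun w => by rw [hw0]; exact le_csSup hbdd ⟨w, rfl⟩
  obtain ⟨fA, gA, hA⟩ := aux_exists_minor _ _ (A.map (MvPolynomial.eval w0))
  obtain ⟨fB, gB, hB⟩ := aux_exists_minor _ _ (B.map (MvPolynomial.eval w0))
  have hpA0 : MvPolynomial.eval w0 (A.submatrix fA gA).det ≠ 0 := by
    rw [RingHom.map_det, RingHom.mapMatrix_apply, ← Matrix.submatrix_map]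
    exact hA
  have hpB0 : MvPolynomial.eval w0 (B.submatrix fB gB).det ≠ 0 := by
    rw [RingHom.map_det, RingHom.mapMatrix_apply, ← Matrix.submatrix_map]
    exact hB
  have hp : (A.submatrix fA gA).det * (B.submatrix fB gB).det ≠ 0 := by
    intro h
    apply hpA0
    have := congrArg (MvPolynomial.eval w0) h
    rw [_root_.map_mul, map_zero] at this
    rcases mul_eq_zero.mp this with h' | h'
    · exact h'
    · exact absurd h' hpB0
  obtain ⟨z, hz, hpz⟩ := aux_torus_dense r _ hp
  rw [_root_.map_mul] at hpz
  have hzA : ((A.map (MvPolynomial.eval z)).submatrix fA gA).det ≠ 0 := by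
    rw [Matrix.submatrix_map, ← RingHom.mapMatrix_apply, ← RingHom.map_det]
    exact fun h => hpz (by rw [h, zero_mul])
  have hzB : ((B.map (MvPolynomial.eval z)).submatrix fB gB).det ≠ 0 := by
    rw [Matrix.submatrix_map, ← RingHom.mapMatrix_apply, ← RingHom.map_det]
    exact fun h => hpz (by rw [h, mul_zero])
  refine ⟨z, hz, fun w => ?_⟩
  have h1 : (A.map (MvPolynomial.eval w0)).rank ≤ (A.map (MvPolynomial.eval z)).rank :=
    aux_rank_ge_of_minor _ _ _ _ fA gA hzA
  have h2 : (B.map (MvPolynomial.eval w0)).rank ≤ (B.map (MvPolynomial.eval z)).rank :=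
    aux_rank_ge_of_minor _ _ _ _ fB gB hzB
  exact (hmax w).trans (add_le_add h1 h2)
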